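/- There exist δ ∈ (0,1) and a function f : ℂ → ℂ complex-differentiable on the open ball B(1,δ), with f(x) ∈ ℝ for every real x ∈ B(1,δ), f(1) = 0, and f'(1) = 2^{2/3}, such that for every z ∈ B(1,δ) with z ∉ (−∞,1] one has f(z) ∉ (−∞,0] and f(z)^{3/2} = (3/2)·φ_←(z). -/

import Mathlib

open Complex Metric MeasureTheory intervalIntegral Set

/-- `φ_←(z) = 2(z−1)·∫_0^1 (t(z−1))^{1/2}·(1+t(z−1))^{−1/2} dt`, the integral of
`2(s−1)^{1/2} s^{−1/2}` over the straight segment from `1` to `z` (principal powers). -/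
noncomputable def phiLeft (z : ℂ) : ℂ :=
  2 * (z - 1) *
    ∫ t in (0:ℝ)..1, ((t : ℂ) * (z - 1)) ^ ((1 : ℂ)/2) * (1 + (t : ℂ) * (z - 1)) ^ (-((1 : ℂ)/2))


noncomputable def Hfun (w : ℂ) : ℂ :=
  ∫ t in (0:ℝ)..1, (Real.sqrt t : ℂ) * (1 + (t:ℂ) * w) ^ (-((1:ℂ)/2))

lemma base_re_pos {w : ℂ} (hw : ‖w‖ < 1) {t : ℝ} (ht : t ∈ Set.uIcc (0:ℝ) 1) :
    0 < (1 + (t:ℂ) * w).re := by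
  rw [Set.uIcc_of_le (by norm_num)] at ht
  have h1 : |((t:ℂ) * w).re| ≤ ‖(t:ℂ)*w‖ := Complex.abs_re_le_norm _
  have h2 : ‖(t:ℂ)*w‖ = |t| * ‖w‖ := by
    simp [Complex.norm_real]
  have h3 : |t| * ‖w‖ < 1 := by
    rcases eq_or_lt_of_le ht.1 with h | h
    · simp [← h]
    · calc |t| * ‖w‖ ≤ 1 * ‖w‖ := by
            apply mul_le_mul_of_nonneg_right _ (norm_nonneg w)
            rw [_root_.abs_of_nonneg ht.1]; exact ht.2
        _ < 1 := by simpa using hw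
  have : |((t:ℂ)*w).re| < 1 := lt_of_le_of_lt (h2 ▸ h1) h3
  simp only [Complex.add_re, Complex.one_re]
  nlinarith [abs_nonneg (((t:ℂ)*w).re), neg_abs_le (((t:ℂ)*w).re)]

lemma base_slit {w : ℂ} (hw : ‖w‖ < 1) {t : ℝ} (ht : t ∈ Set.uIcc (0:ℝ) 1) :
    (1 + (t:ℂ) * w) ∈ Complex.slitPlane := Or.inl (base_re_pos hw ht)

lemma integrand_contOn {w : ℂ} (hw : ‖w‖ < 1) :
    ContinuousOn (fun t : ℝ => (Real.sqrt t : ℂ) * (1 + (t:ℂ) * w) ^ (-((1:ℂ)/2)))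
      (Set.uIcc (0:ℝ) 1) := by
  apply ContinuousOn.mul
  · exact (Complex.continuous_ofReal.comp Real.continuous_sqrt).continuousOn
  · intro t ht
    apply ContinuousAt.continuousWithinAt
    have hc : ContinuousAt (fun t : ℝ => 1 + (t:ℂ)*w) t :=
      (continuous_const.add (Complex.continuous_ofReal.mul continuous_const)).continuousAt
    exact hc.cpow continuousAt_const (base_slit hw ht)

lemma integrand_intble {w : ℂ} (hw : ‖w‖ < 1) :
    IntervalIntegrable (fun t : ℝ => (Real.sqrt t : ℂ) * (1 + (t:ℂ) * w) ^ (-((1:ℂ)/2)))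
      volume 0 1 :=
  (integrand_contOn hw).intervalIntegrable

lemma Hfun_zero : Hfun 0 = 2/3 := by
  have h1 : Hfun 0 = ∫ t in (0:ℝ)..1, ((Real.sqrt t : ℝ) : ℂ) := by
    unfold Hfun
    apply intervalIntegral.integral_congr
    intro t ht
    simp
  rw [h1, intervalIntegral.integral_ofReal]
  have h2 : ∫ t in (0:ℝ)..1, Real.sqrt t = 2/3 := by
    have : ∀ t ∈ Set.uIcc (0:ℝ) 1, Real.sqrt t = t ^ ((1:ℝ)/2) := fun t _ =>
      Real.sqrt_eq_rpow t
    rw [intervalIntegral.integral_congr this, integral_rpow (Or.inl (by norm_num))]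
    rw [Real.one_rpow, Real.zero_rpow (by norm_num)]
    norm_num
  rw [h2]; norm_num

lemma im_log_mul_neg_half (ζ : ℂ) : (Complex.log ζ * (-((1:ℂ)/2))).im = -(ζ.arg)/2 := by
  simp [Complex.mul_im, Complex.log_im]
  ring

lemma im_cpow_neg_half_nonpos {ζ : ℂ} (hre : 0 < ζ.re) (him : 0 ≤ ζ.im) :
    (ζ ^ (-((1:ℂ)/2))).im ≤ 0 := by
  have hζ : ζ ≠ 0 := fun h => by simp [h] at hre
  rw [Complex.cpow_def_of_ne_zero hζ, Complex.exp_im, im_log_mul_neg_half]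
  apply mul_nonpos_of_nonneg_of_nonpos (Real.exp_nonneg _)
  apply Real.sin_nonpos_of_nonpos_of_neg_pi_le
  · have := Complex.arg_nonneg_iff.2 him; linarith
  · have := Complex.arg_le_pi ζ; have := Real.pi_pos; linarith

lemma im_cpow_neg_half_nonneg {ζ : ℂ} (hre : 0 < ζ.re) (him : ζ.im ≤ 0) :
    0 ≤ (ζ ^ (-((1:ℂ)/2))).im := by
  have hζ : ζ ≠ 0 := fun h => by simp [h] at hre
  rw [Complex.cpow_def_of_ne_zero hζ, Complex.exp_im, im_log_mul_neg_half]
  apply mul_nonneg (Real.exp_nonneg _)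
  apply Real.sin_nonneg_of_nonneg_of_le_pi
  · have harg : ζ.arg ≤ 0 := by
      rcases lt_or_eq_of_le him with h | h
      · exact le_of_lt (Complex.arg_neg_iff.2 h)
      · rw [Complex.arg_eq_zero_iff.2 ⟨le_of_lt hre, h⟩]
    linarith
  · have := Complex.neg_pi_lt_arg ζ
    have := Real.pi_pos
    linarith

lemma Hfun_im_nonpos {w : ℂ} (hw : ‖w‖ < 1) (him : 0 ≤ w.im) : (Hfun w).im ≤ 0 := by
  have hint : IntegrableOn
      (fun t : ℝ => (Real.sqrt t : ℂ) * (1 + (t:ℂ) * w) ^ (-((1:ℂ)/2))) (Set.Ioc 0 1) volume :=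
    (integrand_intble hw).1
  unfold Hfun
  rw [intervalIntegral.integral_of_le (by norm_num : (0:ℝ) ≤ 1),
    show (∫ t in Set.Ioc (0:ℝ) 1, (Real.sqrt t : ℂ) * (1 + (t:ℂ) * w) ^ (-((1:ℂ)/2))).im
      = Complex.imCLM (∫ t in Set.Ioc (0:ℝ) 1, (Real.sqrt t : ℂ) * (1 + (t:ℂ) * w) ^ (-((1:ℂ)/2)))
      from rfl,
    ← ContinuousLinearMap.integral_comp_comm _ hint]
  refine MeasureTheory.integral_nonpos_of_ae
    ((MeasureTheory.ae_restrict_iff' measurableSet_Ioc).2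
      (Filter.Eventually.of_forall fun t ht => ?_))
  simp only [Complex.imCLM_apply]
  have htu : t ∈ Set.uIcc (0:ℝ) 1 := by
    rw [Set.uIcc_of_le (by norm_num)]; exact ⟨le_of_lt ht.1, ht.2⟩
  show ((Real.sqrt t : ℂ) * (1 + (t:ℂ) * w) ^ (-((1:ℂ)/2))).im ≤ (0:ℝ)
  rw [show ((Real.sqrt t : ℂ) * (1 + (t:ℂ) * w) ^ (-((1:ℂ)/2))).im
      = Real.sqrt t * ((1 + (t:ℂ) * w) ^ (-((1:ℂ)/2))).im by simp [Complex.mul_im]]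
  apply mul_nonpos_of_nonneg_of_nonpos (Real.sqrt_nonneg t)
  apply im_cpow_neg_half_nonpos (base_re_pos hw htu)
  simp only [Complex.add_im, Complex.one_im, Complex.mul_im, Complex.ofReal_re,
    Complex.ofReal_im, zero_mul, zero_add, add_zero]
  exact mul_nonneg ht.1.le him

lemma Hfun_im_nonneg {w : ℂ} (hw : ‖w‖ < 1) (him : w.im ≤ 0) : 0 ≤ (Hfun w).im := by
  have hint : IntegrableOn
      (fun t : ℝ => (Real.sqrt t : ℂ) * (1 + (t:ℂ) * w) ^ (-((1:ℂ)/2))) (Set.Ioc 0 1) volume :=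
    (integrand_intble hw).1
  unfold Hfun
  rw [intervalIntegral.integral_of_le (by norm_num : (0:ℝ) ≤ 1),
    show (∫ t in Set.Ioc (0:ℝ) 1, (Real.sqrt t : ℂ) * (1 + (t:ℂ) * w) ^ (-((1:ℂ)/2))).im
      = Complex.imCLM (∫ t in Set.Ioc (0:ℝ) 1, (Real.sqrt t : ℂ) * (1 + (t:ℂ) * w) ^ (-((1:ℂ)/2)))
      from rfl,
    ← ContinuousLinearMap.integral_comp_comm _ hint]
  refine MeasureTheory.integral_nonneg_of_ae
    ((MeasureTheory.ae_restrict_iff' measurableSet_Ioc).2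
      (Filter.Eventually.of_forall fun t ht => ?_))
  simp only [Complex.imCLM_apply]
  have htu : t ∈ Set.uIcc (0:ℝ) 1 := by
    rw [Set.uIcc_of_le (by norm_num)]; exact ⟨le_of_lt ht.1, ht.2⟩
  show (0:ℝ) ≤ ((Real.sqrt t : ℂ) * (1 + (t:ℂ) * w) ^ (-((1:ℂ)/2))).im
  rw [show ((Real.sqrt t : ℂ) * (1 + (t:ℂ) * w) ^ (-((1:ℂ)/2))).im
      = Real.sqrt t * ((1 + (t:ℂ) * w) ^ (-((1:ℂ)/2))).im by simp [Complex.mul_im]]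
  apply mul_nonneg (Real.sqrt_nonneg t)
  apply im_cpow_neg_half_nonneg (base_re_pos hw htu)
  simp only [Complex.add_im, Complex.one_im, Complex.mul_im, Complex.ofReal_re,
    Complex.ofReal_im, zero_mul, zero_add, add_zero]
  have : 0 ≤ t := ht.1.le
  nlinarith

lemma half_cpow_factor {w : ℂ} {t : ℝ} (ht : t ∈ Set.uIcc (0:ℝ) 1) :
    ((t:ℂ) * w) ^ ((1:ℂ)/2) = (Real.sqrt t : ℂ) * w ^ ((1:ℂ)/2) := by
  rw [Set.uIcc_of_le (by norm_num)] at ht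
  rcases eq_or_lt_of_le ht.1 with h | h
  · rw [← h]; simp [Complex.zero_cpow (by norm_num : (1:ℂ)/2 ≠ 0)]
  · rcases eq_or_ne w 0 with rfl | hw
    · simp [Complex.zero_cpow (by norm_num : (1:ℂ)/2 ≠ 0)]
    · have htc : ((t:ℂ)) ≠ 0 := Complex.ofReal_ne_zero.2 (ne_of_gt h)
      rw [Complex.cpow_def_of_ne_zero (mul_ne_zero htc hw),
        Complex.log_ofReal_mul h hw, add_mul, Complex.exp_add,
        ← Complex.cpow_def_of_ne_zero hw]
      congr 1
      have h2 : ((Real.log t : ℂ)) * (1/2) = ((Real.log t * (1/2) : ℝ) : ℂ) := by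
        push_cast; ring
      rw [h2, ← Complex.ofReal_exp, Real.sqrt_eq_rpow, Real.rpow_def_of_pos h]

lemma phiLeft_factor (z : ℂ) :
    phiLeft z = 2 * (z - 1) * ((z - 1) ^ ((1:ℂ)/2) * Hfun (z - 1)) := by
  unfold phiLeft Hfun
  congr 1
  rw [← intervalIntegral.integral_const_mul]
  apply intervalIntegral.integral_congr
  intro t ht
  simp only [half_cpow_factor ht]
  ring

lemma Hfun_real {x : ℝ} (hx : |x| < 1) : ∃ r : ℝ, Hfun (x:ℂ) = (r:ℂ) := by
  have hx' : ‖(x:ℂ)‖ < 1 := by simpa using hx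
  refine ⟨∫ t in (0:ℝ)..1, Real.sqrt t * (1 + t*x) ^ (-(1/2) : ℝ), ?_⟩
  unfold Hfun
  rw [← intervalIntegral.integral_ofReal]
  apply intervalIntegral.integral_congr
  intro t ht
  have hpos : 0 < 1 + t * x := by
    have := base_re_pos hx' ht
    simpa using this
  push_cast
  rw [Complex.ofReal_cpow hpos.le]
  push_cast
  norm_num

lemma abs_base_ge {x : ℂ} (hx : ‖x‖ < 1/2) {t : ℝ} (ht : t ∈ Set.uIcc (0:ℝ) 1) :
    (1:ℝ)/2 ≤ ‖1 + (t:ℂ) * x‖ := by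
  rw [Set.uIcc_of_le (by norm_num)] at ht
  refine le_trans ?_ (Complex.re_le_norm _)
  simp only [Complex.add_re, Complex.one_re, Complex.mul_re, Complex.ofReal_re,
    Complex.ofReal_im, zero_mul, sub_zero]
  have h1 : |x.re| ≤ ‖x‖ := Complex.abs_re_le_norm x
  have h2 : ‖x‖ < 1/2 := hx
  have h3 : t * x.re ≥ -(1/2) := by nlinarith [neg_abs_le x.re, abs_nonneg x.re, ht.1, ht.2]
  linarith

lemma abs_cpow_neg32_le {u : ℂ} (hu : (1:ℝ)/2 ≤ ‖u‖) :
    ‖u ^ (-((1:ℂ)/2) - 1)‖ ≤ 4 := by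
  have hu0 : u ≠ 0 := by
    intro h; rw [h] at hu; simp at hu; linarith
  rw [Complex.norm_cpow_of_ne_zero hu0]
  have him : (-((1:ℂ)/2) - 1).im = 0 := by simp
  have hre : (-((1:ℂ)/2) - 1).re = -(3/2) := by simp; norm_num
  rw [him, hre]
  simp only [mul_zero, Real.exp_zero, div_one]
  have h1 : ‖u‖ ^ (-(3/2) : ℝ) ≤ ((1:ℝ)/2) ^ (-(3/2) : ℝ) := by
    apply Real.rpow_le_rpow_of_nonpos (by linarith) hu (by norm_num)
  refine le_trans h1 ?_
  rw [Real.rpow_neg (by norm_num)]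
  rw [show ((1:ℝ)/2) = 2⁻¹ by norm_num, Real.inv_rpow (by norm_num), inv_inv]
  calc (2:ℝ) ^ ((3:ℝ)/2) ≤ 2 ^ (2:ℝ) := by
        apply Real.rpow_le_rpow_of_exponent_le (by norm_num) (by norm_num)
    _ = 4 := by
        have h2 : (2:ℝ) ^ (2:ℝ) = (2:ℝ) ^ (2:ℕ) := by
          rw [← Real.rpow_natCast]; norm_num
        rw [h2]; norm_num

lemma Hfun_hasDerivAt {w₀ : ℂ} (hw : ‖w₀‖ < 1/2) : ∃ d, HasDerivAt Hfun d w₀ := by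
  set ε : ℝ := 1/2 - ‖w₀‖ with hε
  have hε_pos : 0 < ε := by rw [hε]; linarith
  have hball : ∀ x ∈ ball w₀ ε, ‖x‖ < 1/2 := by
    intro x hx
    have h1 : ‖x - w₀‖ < ε := mem_ball_iff_norm.1 hx
    calc ‖x‖ = ‖w₀ + (x - w₀)‖ := by ring_nf
      _ ≤ ‖w₀‖ + ‖x - w₀‖ := norm_add_le _ _
      _ < ‖w₀‖ + ε := by linarith
      _ = 1/2 := by rw [hε]; ring
  have key := intervalIntegral.hasDerivAt_integral_of_dominated_loc_of_deriv_le
    (F := fun x t => (Real.sqrt t : ℂ) * (1 + (t:ℂ) * x) ^ (-((1:ℂ)/2)))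
    (F' := fun x t => (Real.sqrt t : ℂ) * ((-((1:ℂ)/2)) * (1 + (t:ℂ) * x) ^ (-((1:ℂ)/2) - 1) * t))
    (x₀ := w₀) (a := 0) (b := 1) (μ := MeasureTheory.volume) (bound := fun _ => 4)
    (ball_mem_nhds w₀ hε_pos) ?_ ?_ ?_ ?_ ?_ ?_
  · exact ⟨_, key.2⟩
  · -- measurability of F x
    apply Filter.eventually_of_mem (ball_mem_nhds w₀ hε_pos)
    intro x hx
    exact ((integrand_contOn (lt_trans (hball x hx) (by norm_num))).mono
      Set.uIoc_subset_uIcc).aestronglyMeasurable measurableSet_uIoc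
  · exact integrand_intble (lt_trans hw (by norm_num))
  · -- measurability of F' w₀
    have hcont : ContinuousOn
        (fun t : ℝ => (Real.sqrt t : ℂ) * ((-((1:ℂ)/2)) * (1 + (t:ℂ) * w₀) ^ (-((1:ℂ)/2) - 1) * t))
        (Set.uIcc (0:ℝ) 1) := by
      apply ContinuousOn.mul
      · exact (Complex.continuous_ofReal.comp Real.continuous_sqrt).continuousOn
      · apply ContinuousOn.mul
        · apply ContinuousOn.mul continuousOn_const
          intro t ht
          apply ContinuousAt.continuousWithinAt
          have hc : ContinuousAt (fun t : ℝ => 1 + (t:ℂ)*w₀) t :=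
            (continuous_const.add (Complex.continuous_ofReal.mul continuous_const)).continuousAt
          exact hc.cpow continuousAt_const (base_slit (lt_trans hw (by norm_num)) ht)
        · exact Complex.continuous_ofReal.continuousOn
    exact (hcont.mono Set.uIoc_subset_uIcc).aestronglyMeasurable measurableSet_uIoc
  · -- bound
    refine Filter.Eventually.of_forall fun t => fun ht x hx => ?_
    have htu : t ∈ Set.uIcc (0:ℝ) 1 := Set.uIoc_subset_uIcc ht
    have ht01 : t ∈ Set.Ioc (0:ℝ) 1 := by rwa [Set.uIoc_of_le (by norm_num)] at ht
    have h1 : ‖(1 + (t:ℂ) * x) ^ (-((1:ℂ)/2) - 1)‖ ≤ 4 :=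
      abs_cpow_neg32_le (abs_base_ge (hball x hx) htu)
    have hsq : Real.sqrt t ≤ 1 := by
      rw [show (1:ℝ) = Real.sqrt 1 by simp]
      exact Real.sqrt_le_sqrt ht01.2
    calc ‖(Real.sqrt t : ℂ) * ((-((1:ℂ)/2)) * (1 + (t:ℂ) * x) ^ (-((1:ℂ)/2) - 1) * t)‖
        = Real.sqrt t * ((1/2) * ‖(1 + (t:ℂ) * x) ^ (-((1:ℂ)/2) - 1)‖ * |t|) := by
          simp [Complex.norm_real, _root_.abs_of_nonneg (Real.sqrt_nonneg t), map_mul]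
      _ ≤ 1 * ((1/2) * 4 * 1) := by
          apply mul_le_mul hsq _ _ (by norm_num)
          · apply mul_le_mul _ (by rw [_root_.abs_of_nonneg ht01.1.le]; exact ht01.2) (abs_nonneg t)
              (by norm_num)
            apply mul_le_mul_of_nonneg_left h1 (by norm_num)
          · positivity
      _ ≤ 4 := by norm_num
  · exact intervalIntegrable_const
  · -- differentiability
    refine Filter.Eventually.of_forall fun t => fun ht x hx => ?_
    have htu : t ∈ Set.uIcc (0:ℝ) 1 := Set.uIoc_subset_uIcc ht
    have hinner : HasDerivAt (fun x : ℂ => 1 + (t:ℂ) * x) ((t:ℂ)) x := by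
      simpa using ((hasDerivAt_id x).const_mul ((t:ℂ))).const_add 1
    have hcp : HasDerivAt (fun x : ℂ => (1 + (t:ℂ) * x) ^ (-((1:ℂ)/2)))
        ((-((1:ℂ)/2)) * (1 + (t:ℂ) * x) ^ (-((1:ℂ)/2) - 1) * t) x :=
      hinner.cpow_const (base_slit (lt_trans (hball x hx) (by norm_num)) htu)
    exact hcp.const_mul _

lemma arg_nonpos_of {ζ : ℂ} (hre : 0 < ζ.re) (him : ζ.im ≤ 0) : ζ.arg ≤ 0 := by
  rcases lt_or_eq_of_le him with h | h
  · exact le_of_lt (Complex.arg_neg_iff.2 h)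
  · rw [Complex.arg_eq_zero_iff.2 ⟨le_of_lt hre, h⟩]


/-- There are `δ ∈ (0,1)` and a function `f` analytic on `B(1,δ)`, real on
real points, with `f(1) = 0`, `f'(1) = 2^{2/3}`, such that off the cut `(−∞,1]` the value
`f(z)` avoids `(−∞,0]` and `f(z)^{3/2} = (3/2) φ_←(z)`. -/
theorem stmt_3 :
    ∃ δ : ℝ, 0 < δ ∧ δ < 1 ∧
      ∃ f : ℂ → ℂ, DifferentiableOn ℂ f (ball (1 : ℂ) δ) ∧
        (∀ x : ℝ, (x : ℂ) ∈ ball (1 : ℂ) δ → (f x).im = 0) ∧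
        f 1 = 0 ∧ deriv f 1 = (2 : ℂ) ^ ((2 : ℂ)/3) ∧
        ∀ z ∈ ball (1 : ℂ) δ, z ∉ (Complex.ofReal '' Set.Iic 1) →
          f z ∉ (Complex.ofReal '' Set.Iic 0) ∧
          (f z) ^ ((3 : ℂ)/2) = (3/2 : ℂ) * phiLeft z := by

  -- continuity of Hfun at 0
  obtain ⟨d₀, hd₀⟩ := Hfun_hasDerivAt (w₀ := 0) (by norm_num)
  have hc : ContinuousAt Hfun 0 := hd₀.continuousAt
  obtain ⟨δ₀, hδ₀pos, hδ₀⟩ := Metric.continuousAt_iff.1 hc (1/6) (by norm_num)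
  set δ : ℝ := min (δ₀/2) (1/4) with hδdef
  have hδpos : 0 < δ := lt_min (by linarith) (by norm_num)
  have hδ14 : δ ≤ 1/4 := min_le_right _ _
  -- the key estimate on a ball of radius δ
  have hkey : ∀ w : ℂ, ‖w‖ < δ → 3/2 < (3 * Hfun w).re ∧ (3 * Hfun w) ≠ 0 := by
    intro w hw
    have h1 : dist w 0 < δ₀ := by
      rw [dist_zero_right]; exact lt_of_lt_of_le hw (le_trans (min_le_left _ _) (by linarith))
    have h2 : ‖Hfun w - 2/3‖ < 1/6 := by
      have := hδ₀ h1
      rwa [Hfun_zero, dist_eq_norm] at this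
    have h3 : ‖3 * Hfun w - 2‖ < 1/2 := by
      have : 3 * Hfun w - 2 = 3 * (Hfun w - 2/3) := by ring
      rw [this, norm_mul]
      simp only [Complex.norm_ofNat]
      linarith
    have h4 : |(3 * Hfun w - 2).re| ≤ ‖3 * Hfun w - 2‖ := Complex.abs_re_le_norm _
    have h5 : (3 * Hfun w - 2).re = (3 * Hfun w).re - 2 := by simp
    constructor
    · have := neg_abs_le (3 * Hfun w - 2).re
      rw [h5] at h4
      cases' abs_le.1 h4 with hl hr
      linarith
    · intro h0
      rw [h0] at h3
      simp at h3
      linarith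
  refine ⟨δ, hδpos, lt_of_le_of_lt hδ14 (by norm_num),
    fun z => (z - 1) * (3 * Hfun (z - 1)) ^ ((2:ℂ)/3), ?_, ?_, ?_, ?_, ?_⟩
  · -- differentiability
    intro z hz
    have hw : ‖z - 1‖ < δ := mem_ball_iff_norm.1 hz
    obtain ⟨d, hd⟩ := Hfun_hasDerivAt (w₀ := z - 1) (lt_of_lt_of_le hw (by linarith))
    have hHd : DifferentiableAt ℂ (fun z : ℂ => Hfun (z - 1)) z := by
      have := hd.differentiableAt.comp z
        (((differentiable_id).sub_const 1).differentiableAt (x := z))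
      exact this
    have hslit : (3 * Hfun (z - 1)) ∈ Complex.slitPlane := Or.inl (by
      have := (hkey _ hw).1; linarith)
    apply DifferentiableAt.differentiableWithinAt
    apply DifferentiableAt.mul ((differentiable_id).sub_const 1).differentiableAt
    have hdH := (hHd.const_mul (3:ℂ)).hasDerivAt
    exact (hdH.cpow_const hslit).differentiableAt
  · -- real on reals
    intro x hx
    have hw : ‖(x:ℂ) - 1‖ < δ := mem_ball_iff_norm.1 hx
    have hcast : (x:ℂ) - 1 = ((x - 1 : ℝ) : ℂ) := by push_cast; ring
    have habs : |x - 1| < 1 := by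
      rw [hcast] at hw
      simp only [Complex.norm_real, Real.norm_eq_abs] at hw
      linarith [hδ14]
    obtain ⟨r, hr⟩ := Hfun_real habs
    have hre : (0:ℝ) < 3 * r := by
      have h := (hkey _ hw).1
      rw [hcast, hr] at h
      have h2 : ((3:ℂ) * (r:ℂ)).re = 3 * r := by
        rw [show ((3:ℂ) * (r:ℂ)) = ((3*r:ℝ):ℂ) from by push_cast; ring, Complex.ofReal_re]
      rw [h2] at h
      linarith
    have : ((x:ℂ) - 1) * (3 * Hfun ((x:ℂ) - 1)) ^ ((2:ℂ)/3)
        = (((x - 1) * (3*r) ^ ((2:ℝ)/3) : ℝ) : ℂ) := by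
      rw [hcast, hr]
      rw [show (3:ℂ) * (r:ℂ) = ((3*r:ℝ):ℂ) by push_cast; ring]
      rw [show ((2:ℂ)/3) = (((2:ℝ)/3 : ℝ) : ℂ) by push_cast; ring]
      rw [← Complex.ofReal_cpow hre.le]
      push_cast
      ring
    show (((x:ℂ) - 1) * (3 * Hfun ((x:ℂ) - 1)) ^ ((2:ℂ)/3)).im = 0
    rw [this]
    simp
  · simp
  · -- derivative at 1
    have hd1 : HasDerivAt (fun z : ℂ => z - 1) 1 1 := (hasDerivAt_id 1).sub_const 1
    obtain ⟨d, hd⟩ := Hfun_hasDerivAt (w₀ := 0) (by norm_num)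
    have hH1 : HasDerivAt (fun z : ℂ => Hfun (z - 1)) d 1 := by
      have hd' : HasDerivAt Hfun d ((1:ℂ) - 1) := by simpa using hd
      have hH1' : HasDerivAt (Hfun ∘ fun z : ℂ => z - 1) (d * 1) 1 :=
        HasDerivAt.comp 1 hd' hd1
      simpa [Function.comp_def] using hH1'
    have hslit : ((3:ℂ) * Hfun ((1:ℂ) - 1)) ∈ Complex.slitPlane := by
      simp only [sub_self, Hfun_zero]
      exact Or.inl (by norm_num)
    have hg : HasDerivAt (fun z : ℂ => (3 * Hfun (z - 1)) ^ ((2:ℂ)/3))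
        (((2:ℂ)/3) * (3 * Hfun ((1:ℂ) - 1)) ^ ((2:ℂ)/3 - 1) * (3 * d)) 1 :=
      (hH1.const_mul 3).cpow_const hslit
    have hf : HasDerivAt (fun z : ℂ => (z - 1) * (3 * Hfun (z - 1)) ^ ((2:ℂ)/3))
        (1 * (3 * Hfun ((1:ℂ) - 1)) ^ ((2:ℂ)/3)
          + ((1:ℂ) - 1) * (((2:ℂ)/3) * (3 * Hfun ((1:ℂ) - 1)) ^ ((2:ℂ)/3 - 1) * (3 * d))) 1 :=
      hd1.mul hg
    rw [hf.deriv]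
    simp only [sub_self, Hfun_zero]
    rw [show (3:ℂ) * (2/3) = 2 by norm_num]
    ring
  · -- main identity
    intro z hz hzcut
    have hbeta : (fun z : ℂ => (z - 1) * (3 * Hfun (z - 1)) ^ ((2:ℂ)/3)) z
        = (z - 1) * (3 * Hfun (z - 1)) ^ ((2:ℂ)/3) := rfl
    rw [hbeta]
    have hw : ‖z - 1‖ < δ := mem_ball_iff_norm.1 hz
    have hw1 : ‖z - 1‖ < 1 := lt_of_lt_of_le hw (by linarith)
    set w : ℂ := z - 1 with hwdef
    have hw0 : w ≠ 0 := by
      intro h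
      apply hzcut
      have : z = 1 := by rw [hwdef] at h; linear_combination h
      exact ⟨1, by simp, by rw [this]; simp⟩
    have hwcut2 : ¬(w.im = 0 ∧ w.re ≤ 0) := by
      rintro ⟨h1, h2⟩
      apply hzcut
      refine ⟨z.re, ?_, ?_⟩
      · simp only [Set.mem_Iic]
        have : w.re = z.re - 1 := by rw [hwdef]; simp
        linarith [h2, this ▸ h2]
      · have : z.im = 0 := by
          have : w.im = z.im := by rw [hwdef]; simp
          linarith [this ▸ h1]
        exact (Complex.ext_iff.2 ⟨by simp, by simp [this]⟩)
    set a : ℂ := 3 * Hfun w with hadef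
    have ha_re : 3/2 < a.re := (hkey w hw).1
    have ha0 : a ≠ 0 := (hkey w hw).2
    have harg : |a.arg| < Real.pi / 2 :=
      Complex.abs_arg_lt_pi_div_two_iff.2 (Or.inl (by linarith))
    set L : ℂ := Complex.log w with hLdef
    set S : ℂ := L + Complex.log a * ((2:ℂ)/3) with hSdef
    have hSim : S.im = w.arg + a.arg * (2/3) := by
      have h23 : ((2:ℂ)/3) = ((2/3:ℝ):ℂ) := by norm_num
      rw [hSdef, hLdef, h23, Complex.add_im, Complex.mul_im, Complex.ofReal_re,
        Complex.ofReal_im, mul_zero, Complex.log_im, Complex.log_im, zero_add]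
    have hargw_ne : w.arg ≠ Real.pi := by
      intro h
      rcases Complex.arg_eq_pi_iff.1 h with ⟨h1, h2⟩
      exact hwcut2 ⟨h2, le_of_lt h1⟩
    have hargw_lt : w.arg < Real.pi := lt_of_le_of_ne (Complex.arg_le_pi w) hargw_ne
    have hargw_gt : -Real.pi < w.arg := Complex.neg_pi_lt_arg w
    have hpi := Real.pi_pos
    have hS_bounds : -Real.pi < S.im ∧ S.im < Real.pi := by
      rcases le_or_gt 0 w.im with him | him
      · have hHa : a.im ≤ 0 := by
          rw [hadef]
          simp only [Complex.mul_im]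
          have := Hfun_im_nonpos hw1 him
          simp
          linarith
        have harga : a.arg ≤ 0 := arg_nonpos_of (by linarith) hHa
        have hargw0 : 0 ≤ w.arg := Complex.arg_nonneg_iff.2 him
        rw [hSim]
        constructor
        · nlinarith [abs_lt.1 harg]
        · nlinarith
      · have hHa : 0 ≤ a.im := by
          rw [hadef]
          simp only [Complex.mul_im]
          have := Hfun_im_nonneg hw1 him.le
          simp
          linarith
        have harga : 0 ≤ a.arg := Complex.arg_nonneg_iff.2 hHa
        have hargw0 : w.arg < 0 := Complex.arg_neg_iff.2 him
        rw [hSim]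
        constructor
        · nlinarith
        · nlinarith [abs_lt.1 harg]
    have hfz_exp : w * a ^ ((2:ℂ)/3) = Complex.exp S := by
      rw [Complex.cpow_def_of_ne_zero ha0, hSdef, Complex.exp_add, ← Complex.exp_log hw0]
    have hfz0 : w * a ^ ((2:ℂ)/3) ≠ 0 := by
      rw [hfz_exp]; exact Complex.exp_ne_zero S
    have hlog_fz : Complex.log (w * a ^ ((2:ℂ)/3)) = S := by
      rw [hfz_exp, Complex.log_exp hS_bounds.1 hS_bounds.2.le]
    constructor
    · -- not in cut
      rintro ⟨x, hx, hxe⟩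
      have hx0 : x < 0 := by
        rcases lt_or_eq_of_le (Set.mem_Iic.1 hx) with h | h
        · exact h
        · exfalso; apply hfz0; rw [← hxe, h]; simp
      have h1 : (Complex.log (w * a ^ ((2:ℂ)/3))).im = Real.pi := by
        rw [← hxe, Complex.log_im, Complex.arg_ofReal_of_neg hx0]
      rw [hlog_fz] at h1
      linarith [hS_bounds.2]
    · -- the power identity
      rw [Complex.cpow_def_of_ne_zero hfz0, hlog_fz]
      have hrhs : (3/2 : ℂ) * phiLeft z = a * (w * w ^ ((1:ℂ)/2)) := by
        rw [phiLeft_factor, hadef, ← hwdef]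
        ring
      rw [hrhs, Complex.cpow_def_of_ne_zero hw0, ← hLdef]
      conv_rhs => rw [show w = Complex.exp L from (Complex.exp_log hw0).symm]
      rw [← Complex.exp_add, ← Complex.exp_log ha0]
      rw [← Complex.exp_add, hSdef]
      congr 1
      ring
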